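/- Let a = (a_1, ..., a_n) ∈ Z^n_{>0} with n ≥ 2 and gcd(a) = 1, let g(a) be the Frobenius number of a, and let b ∈ Z be such that P(a,b) = {x ∈ R^n_{≥0} : a^T x = b} contains an integer point. Then for every vertex v of P(a,b) there is z ∈ P(a,b) ∩ Z^n with ‖v − z‖_∞ ≤ (g(a) + ‖a‖_∞)/min_i a_i. -/
import Mathlib


/-- for a positive primitive integer vector `a` with Frobenius
number `g` (the greatest integer not representable as a nonnegative integer
combination of the `aᵢ`), and any `b` such that `P(a,b)` contains an integer
point, every vertex `v` of `P(a,b)` has an integer point `z ∈ P(a,b)` with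
`‖v − z‖_∞ ≤ (g + max aᵢ) / min aᵢ`. -/
theorem stmt_8 (n : ℕ) (hn : 2 ≤ n) (a : Fin n → ℤ) (ha : ∀ i, 0 < a i)
    (hgcd : Finset.univ.gcd a = 1)
    (g : ℤ)
    (hg : IsGreatest {m : ℤ |
      ¬ ∃ x : Fin n → ℤ, (∀ i, 0 ≤ x i) ∧ ∑ i, a i * x i = m} g)
    (M m : ℤ) (hM : IsGreatest (Set.range a) M) (hm : IsLeast (Set.range a) m)
    (b : ℤ) (P : Set (Fin n → ℝ))
    (hP : P = {x | (∀ i, 0 ≤ x i) ∧ ∑ i, (a i : ℝ) * x i = (b : ℝ)})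
    (hfeas : ∃ z : Fin n → ℤ, (fun i => (z i : ℝ)) ∈ P)
    (v : Fin n → ℝ) (hv : v ∈ Set.extremePoints ℝ P) :
    ∃ z : Fin n → ℤ, (fun i => (z i : ℝ)) ∈ P ∧
      ‖v - fun i => (z i : ℝ)‖ ≤ ((g : ℝ) + (M : ℝ)) / (m : ℝ) := by
  subst hP
  obtain ⟨z0, hz0nn, hz0sum⟩ := hfeas
  simp only [Set.mem_setOf_eq] at hz0nn hz0sum
  have hz0nn' : ∀ i, 0 ≤ z0 i := fun i => by exact_mod_cast hz0nn i
  have hbsum : ∑ i, a i * z0 i = b := by exact_mod_cast hz0sum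
  have hb0 : 0 ≤ b := by
    rw [← hbsum]
    exact Finset.sum_nonneg fun i _ => mul_nonneg (ha i).le (hz0nn' i)
  obtain ⟨im, him⟩ := hm.1
  obtain ⟨iM, hiM⟩ := hM.1
  have hm0 : 0 < m := him ▸ ha im
  have hM0 : 0 < M := hiM ▸ ha iM
  have hgm1 : (-1 : ℤ) ≤ g := by
    refine hg.2 ?_
    rintro ⟨x, hx, hsum⟩
    have : 0 ≤ ∑ j, a j * x j :=
      Finset.sum_nonneg fun j _ => mul_nonneg (ha j).le (hx j)
    omega
  have hvP := hv.1
  have hvnn : ∀ j, 0 ≤ v j := hvP.1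
  have hvsum : ∑ j, (a j : ℝ) * v j = (b : ℝ) := hvP.2
  -- Step A: at most one coordinate of v is positive.
  have key : ∀ j k, j ≠ k → 0 < v j → 0 < v k → False := by
    intro j k hjk hvj hvk
    have hak : (0 : ℝ) < (a k : ℝ) := by exact_mod_cast ha k
    have haj : (0 : ℝ) < (a j : ℝ) := by exact_mod_cast ha j
    set ε : ℝ := min (v j / (a k : ℝ)) (v k / (a j : ℝ)) with hε
    have hε0 : 0 < ε := lt_min (div_pos hvj hak) (div_pos hvk haj)
    set d : Fin n → ℝ :=
      fun l => if l = j then (a k : ℝ) else if l = k then -(a j : ℝ) else 0 with hd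
    have hsumd : ∑ l, (a l : ℝ) * d l = 0 := by
      have h1 : ∀ l, (a l : ℝ) * d l =
          (if l = j then ((a j : ℝ) * (a k : ℝ)) else 0) +
          (if l = k then (-((a k : ℝ) * (a j : ℝ))) else 0) := by
        intro l
        rcases eq_or_ne l j with rfl | hlj
        · simp [hd, hjk]
        · rcases eq_or_ne l k with rfl | hlk
          · simp [hd, hlj]
          · simp [hd, hlj, hlk]
      rw [Finset.sum_congr rfl fun l _ => h1 l, Finset.sum_add_distrib]
      simp
      ring
    have hmem : ∀ s : ℝ, |s| ≤ ε →
        (v + s • d) ∈ {x : Fin n → ℝ | (∀ i, 0 ≤ x i) ∧ ∑ i, (a i : ℝ) * x i = (b : ℝ)} := by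
      intro s hs
      have hs1 : -ε ≤ s := neg_le_of_abs_le hs
      have hs2 : s ≤ ε := le_of_abs_le hs
      constructor
      · intro l
        simp only [Pi.add_apply, Pi.smul_apply, smul_eq_mul]
        rcases eq_or_ne l j with rfl | hlj
        · have hεb : ε ≤ v l / (a k : ℝ) := min_le_left _ _
          have : ε * (a k : ℝ) ≤ v l := by
            rw [← le_div_iff₀ hak] at *
            exact hεb
          have hsd : d l = (a k : ℝ) := by simp [hd]
          rw [hsd]
          nlinarith
        · rcases eq_or_ne l k with rfl | hlk
          · have hεb : ε ≤ v l / (a j : ℝ) := min_le_right _ _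
            have : ε * (a j : ℝ) ≤ v l := by
              rw [← le_div_iff₀ haj] at *
              exact hεb
            have hsd : d l = -(a j : ℝ) := by simp [hd, hlj]
            rw [hsd]
            nlinarith
          · have hsd : d l = 0 := by simp [hd, hlj, hlk]
            rw [hsd]
            simpa using hvnn l
      · have : ∑ l, (a l : ℝ) * (v l + s * d l)
            = ∑ l, (a l : ℝ) * v l + s * ∑ l, (a l : ℝ) * d l := by
          rw [Finset.mul_sum]
          rw [← Finset.sum_add_distrib]
          congr 1
          ext l
          ring
        simp only [Pi.add_apply, Pi.smul_apply, smul_eq_mul]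
        rw [this, hsumd, hvsum]
        ring
    have h1 := hmem ε (by rw [abs_of_pos hε0])
    have h2 := hmem (-ε) (by rw [abs_neg, abs_of_pos hε0])
    have hseg : v ∈ openSegment ℝ (v + ε • d) (v + (-ε) • d) := by
      refine ⟨1/2, 1/2, by norm_num, by norm_num, by norm_num, ?_⟩
      module
    obtain ⟨hvv, hext⟩ := mem_extremePoints.1 hv
    have := (hext _ h1 _ h2 hseg).1
    have hj := congrFun this j
    simp only [Pi.add_apply, Pi.smul_apply, smul_eq_mul, hd, if_pos rfl, if_true] at hj
    nlinarith
  -- choose the coordinate i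
  obtain ⟨i, hvi⟩ : ∃ i : Fin n, ∀ j, j ≠ i → v j = 0 := by
    by_cases hall : ∀ j, v j = 0
    · exact ⟨⟨0, by omega⟩, fun j _ => hall j⟩
    · push_neg at hall
      obtain ⟨i, hi⟩ := hall
      refine ⟨i, fun j hj => ?_⟩
      by_contra h
      exact key j i hj ((hvnn j).lt_of_ne (Ne.symm h)) ((hvnn i).lt_of_ne (Ne.symm hi))
  have hai : 0 < a i := ha i
  have haiR : (0 : ℝ) < (a i : ℝ) := by exact_mod_cast hai
  have hvival : (a i : ℝ) * v i = (b : ℝ) := by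
    rw [← hvsum]
    symm
    apply Finset.sum_eq_single
    · intro j _ hj
      rw [hvi j hj, mul_zero]
    · simp
  have hviv : v i = (b : ℝ) / (a i : ℝ) := by
    field_simp at hvival ⊢
    linarith
  -- Step B: construct the integer point
  set t : ℤ := if g < b then (b - g - 1) / (a i) else 0 with ht
  set r : ℤ := b - t * a i with hr
  have ht0 : 0 ≤ t := by
    rw [ht]
    split
    · exact Int.ediv_nonneg (by omega) hai.le
    · rfl
  have hrub : r ≤ g + a i ∧ 0 ≤ r ∧
      ∃ y : Fin n → ℤ, (∀ j, 0 ≤ y j) ∧ ∑ j, a j * y j = r := by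
    by_cases hgb : g < b
    · have htval : t = (b - g - 1) / (a i) := by rw [ht, if_pos hgb]
      have hdiv := Int.emod_add_mul_ediv (b - g - 1) (a i)
      have hmod0 : 0 ≤ (b - g - 1) % (a i) := Int.emod_nonneg _ (by omega)
      have hmod1 : (b - g - 1) % (a i) < a i := Int.emod_lt_of_pos _ hai
      have hrval : r = g + 1 + (b - g - 1) % (a i) := by
        rw [hr, htval, mul_comm]
        omega
      have hrg : g < r := by omega
      have hrep : ∃ y : Fin n → ℤ, (∀ j, 0 ≤ y j) ∧ ∑ j, a j * y j = r := by
        by_contra hc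
        push_neg at hc
        have : r ≤ g := hg.2 (by
          intro hcc
          obtain ⟨y, hy1, hy2⟩ := hcc
          exact (hc y hy1) hy2)
        omega
      exact ⟨by omega, by omega, hrep⟩
    · have htval : t = 0 := by rw [ht, if_neg hgb]
      have hrval : r = b := by rw [hr, htval]; ring
      exact ⟨by omega, by omega, ⟨z0, hz0nn', by rw [hrval]; exact hbsum⟩⟩
  obtain ⟨hrle, hr0, y, hy0, hysum⟩ := hrub
  have hrleM : r ≤ g + M := by
    have : a i ≤ M := hM.2 ⟨i, rfl⟩
    omega
  refine ⟨fun j => y j + if j = i then t else 0, ?_, ?_⟩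
  · constructor
    · intro j
      have h1 := hy0 j
      have h2 : 0 ≤ y j + if j = i then t else 0 := by split <;> omega
      show (0 : ℝ) ≤ ((y j + if j = i then t else 0 : ℤ) : ℝ)
      exact_mod_cast h2
    · have hzsum : ∑ j, a j * (y j + if j = i then t else 0) = b := by
        have : ∑ j, a j * (y j + if j = i then t else 0)
            = ∑ j, a j * y j + ∑ j, (if j = i then a i * t else 0) := by
          rw [← Finset.sum_add_distrib]
          congr 1
          ext j
          rcases eq_or_ne j i with rfl | hj
          · simp [mul_add]
          · simp [hj]
        rw [this, hysum, Finset.sum_ite_eq' Finset.univ i (fun _ => a i * t)]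
        simp only [Finset.mem_univ, if_true, hr]
        ring
      show ∑ j, (a j : ℝ) * ((y j + if j = i then t else 0 : ℤ) : ℝ) = (b : ℝ)
      exact_mod_cast hzsum
  · -- the norm bound
    have hC0 : (0 : ℝ) ≤ ((g : ℝ) + (M : ℝ)) / (m : ℝ) := by
      apply div_nonneg
      · have : (0 : ℤ) ≤ g + M := by omega
        exact_mod_cast this
      · exact_mod_cast hm0.le
    rw [pi_norm_le_iff_of_nonneg hC0]
    intro j
    have hmR : (0 : ℝ) < (m : ℝ) := by exact_mod_cast hm0
    have hyb : ∀ l, a l * y l ≤ r := by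
      intro l
      rw [← hysum]
      exact Finset.single_le_sum (fun l' _ => mul_nonneg (ha l').le (hy0 l')) (Finset.mem_univ l)
    simp only [Pi.sub_apply, Real.norm_eq_abs]
    rcases eq_or_ne j i with rfl | hj
    · -- coordinate i
      have hzj : ((y j + if j = j then t else 0 : ℤ) : ℝ) = (y j : ℝ) + (t : ℝ) := by
        simp
      rw [hzj, hviv]
      have hbval : (b : ℝ) = (t : ℝ) * (a j : ℝ) + (r : ℝ) := by
        have : b = t * a j + r := by rw [hr]; ring
        exact_mod_cast this
      have heq : (b : ℝ) / (a j : ℝ) - ((y j : ℝ) + (t : ℝ))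
          = ((r - a j * y j : ℤ) : ℝ) / (a j : ℝ) := by
        rw [hbval]
        push_cast
        field_simp
        ring
      rw [heq]
      have hnum0 : (0 : ℤ) ≤ r - a j * y j := by have := hyb j; omega
      have hnumle : r - a j * y j ≤ g + M := by
        have : 0 ≤ a j * y j := mul_nonneg (ha j).le (hy0 j)
        omega
      rw [abs_of_nonneg (div_nonneg (by exact_mod_cast hnum0) haiR.le)]
      apply div_le_div₀ (by exact_mod_cast (by omega : (0:ℤ) ≤ g + M))
        (by exact_mod_cast hnumle) hmR
      exact_mod_cast hm.2 ⟨j, rfl⟩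
    · -- coordinate j ≠ i
      rw [hvi j hj]
      have hzj : ((y j + if j = i then t else 0 : ℤ) : ℝ) = (y j : ℝ) := by
        simp [hj]
      rw [hzj]
      have habs : |(0 : ℝ) - (y j : ℝ)| = (y j : ℝ) := by
        rw [zero_sub, abs_neg, abs_of_nonneg (by exact_mod_cast hy0 j)]
      rw [habs]
      have hint : m * y j ≤ g + M := by
        have h1 : m ≤ a j := hm.2 ⟨j, rfl⟩
        have h2 : a j * y j ≤ g + M := le_trans (hyb j) hrleM
        nlinarith [hy0 j]
      rw [le_div_iff₀ hmR]
      calc (y j : ℝ) * (m : ℝ) = ((m * y j : ℤ) : ℝ) := by push_cast; ring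
        _ ≤ ((g + M : ℤ) : ℝ) := by exact_mod_cast hint
        _ = (g : ℝ) + (M : ℝ) := by push_cast; ring
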